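/- Let F be an algebraically closed field of characteristic p > 0 and let L be a finite-dimensional transitive irreducible ℤ-graded Lie algebra over F such that the only ideal of L contained in ⊕_{i<0} L_i is zero. Then L possesses a unique minimal ideal I, i.e. a nonzero ideal contained in every nonzero ideal of L; moreover I is a graded ideal, I = ⊕_{i∈ℤ} (I ∩ L_i), and I ∩ L_i = L_i for every i < 0. -/

import Mathlib

namespace Stmt2Aux

variable {F L : Type*} [Field F] [LieRing L] [LieAlgebra F L]

/-- Sum of graded pieces of degree `≤ b`. -/
def Nle (Lgr : ℤ → Submodule F L) (b : ℤ) : Submodule F L :=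
  Submodule.span F {x | ∃ i ≤ b, x ∈ Lgr i}

variable {Lgr : ℤ → Submodule F L}

lemma memId {J : LieIdeal F L} {x : L} : x ∈ (J : Submodule F L) ↔ x ∈ J := Iff.rfl

lemma Lgr_le_Nle {i b : ℤ} (h : i ≤ b) : Lgr i ≤ Nle Lgr b :=
  fun _ hx => Submodule.subset_span ⟨i, h, hx⟩

lemma bracket_Nle (hbracket : ∀ i j : ℤ, ∀ x ∈ Lgr i, ∀ y ∈ Lgr j, ⁅x, y⁆ ∈ Lgr (i + j))
    {j b : ℤ} {y : L} (hy : y ∈ Lgr j) {x : L} (hx : x ∈ Nle Lgr b) :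
    ⁅x, y⁆ ∈ Nle Lgr (b + j) := by
  induction hx using Submodule.span_induction with
  | mem z hz =>
    obtain ⟨i, hib, hzi⟩ := hz
    exact Lgr_le_Nle (by omega) (hbracket i j z hzi y hy)
  | zero => rw [zero_lie]; exact zero_mem _
  | add a b _ _ ha hb => rw [add_lie]; exact add_mem ha hb
  | smul r a _ ha => rw [smul_lie]; exact Submodule.smul_mem _ r ha

lemma bracket_Nle' (hbracket : ∀ i j : ℤ, ∀ x ∈ Lgr i, ∀ y ∈ Lgr j, ⁅x, y⁆ ∈ Lgr (i + j))
    {j b : ℤ} {y : L} (hy : y ∈ Lgr j) {x : L} (hx : x ∈ Nle Lgr b) :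
    ⁅y, x⁆ ∈ Nle Lgr (b + j) := by
  rw [← lie_skew]; exact neg_mem (bracket_Nle hbracket hy hx)

lemma Nle_split {b : ℤ} {x : L} (hx : x ∈ Nle Lgr b) : x ∈ Lgr b ⊔ Nle Lgr (b - 1) := by
  refine Submodule.span_le.mpr ?_ hx
  rintro z ⟨i, hib, hz⟩
  rcases eq_or_lt_of_le hib with rfl | h
  · exact Submodule.mem_sup_left hz
  · exact Submodule.mem_sup_right (Lgr_le_Nle (by omega) hz)

lemma Nle_disjoint (hind : iSupIndep Lgr) {b c : ℤ} (hbc : b < c) {x : L}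
    (hx : x ∈ Lgr c) (hx' : x ∈ Nle Lgr b) : x = 0 := by
  have h1 : Nle Lgr b ≤ ⨆ i ∈ {i : ℤ | i ≤ b}, Lgr i := by
    rw [Nle, Submodule.span_le]
    rintro z ⟨i, hib, hz⟩
    exact Submodule.mem_iSup_of_mem i (Submodule.mem_iSup_of_mem hib hz)
  have h2 : Disjoint (Lgr c) (⨆ i ∈ {i : ℤ | i ≤ b}, Lgr i) :=
    hind.disjoint_biSup (by simp only [Set.mem_setOf_eq]; omega)
  exact Submodule.disjoint_def.mp h2 x hx (h1 hx')

/-- Key lemma: every nonzero ideal contains the lowest graded piece. -/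
lemma key
    (hind : iSupIndep Lgr) (htop : ⨆ i, Lgr i = ⊤)
    (hbracket : ∀ i j : ℤ, ∀ x ∈ Lgr i, ∀ y ∈ Lgr j, ⁅x, y⁆ ∈ Lgr (i + j))
    (htrans : ∀ i : ℤ, 0 ≤ i → ∀ x ∈ Lgr i, (∀ y ∈ Lgr (-1), ⁅x, y⁆ = 0) → x = 0)
    (hirr : ∀ W : Submodule F L, W ≤ Lgr (-1) →
      (∀ z ∈ Lgr 0, ∀ w ∈ W, ⁅z, w⁆ ∈ W) → W = ⊥ ∨ W = Lgr (-1))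
    (hgen : ∀ i : ℤ, 1 < i →
      Lgr (-i) = Submodule.span F {m | ∃ x ∈ Lgr (-1), ∃ y ∈ Lgr (-i + 1), m = ⁅x, y⁆})
    (hrad : ∀ J : LieIdeal F L, (J : Submodule F L) ≤ ⨆ i < (0 : ℤ), Lgr i → J = ⊥)
    {d : ℤ} (hd1 : d ≤ -1) (hdmin : ∀ i, i < d → Lgr i = ⊥)
    {bm : ℤ} (hbm2 : -2 ≤ bm) (hbm : ∀ i, bm < i → Lgr i = ⊥)
    (J : LieIdeal F L) (hJ : J ≠ ⊥) : Lgr d ≤ (J : Submodule F L) := by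
  have hNle2 : Nle Lgr (-2) ≤ ⨆ i < (0 : ℤ), Lgr i := by
    rw [Nle, Submodule.span_le]
    rintro z ⟨i, hib, hz⟩
    exact Submodule.mem_iSup_of_mem i (Submodule.mem_iSup_of_mem (by omega) hz)
  -- Step 1 : the ideal has an element with nonzero component in degree -1 and
  -- no components in degrees ≥ 0.
  have hnot : ¬ ((J : Submodule F L) ⊓ Nle Lgr (-1) ≤ Nle Lgr (-2)) := by
    intro H
    have stepA : ∀ b : ℤ, -1 ≤ b → (J : Submodule F L) ⊓ Nle Lgr b ≤ Nle Lgr (b - 1) := by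
      refine Int.le_induction
        (motive := fun b _ => (J : Submodule F L) ⊓ Nle Lgr b ≤ Nle Lgr (b - 1)) ?_ ?_
      · show (J : Submodule F L) ⊓ Nle Lgr (-1) ≤ Nle Lgr (-1 - 1)
        rw [show (-1 : ℤ) - 1 = -2 from by norm_num]
        exact H
      · intro b hb ih
        rintro x hx
        obtain ⟨hxJ, hxN⟩ := Submodule.mem_inf.mp hx
        have hsplit := Nle_split hxN
        rw [show b + 1 - 1 = b from by ring] at hsplit
        obtain ⟨v, hv, n, hn, hvn⟩ := Submodule.mem_sup.mp hsplit
        have hv0 : v = 0 := by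
          apply htrans (b + 1) (by omega) v hv
          intro y hy
          have h1 : ⁅x, y⁆ ∈ (J : Submodule F L) :=
            Stmt2Aux.memId.mpr
              (lie_mem_left F L J x y (Stmt2Aux.memId.mp hxJ))
          have h2 : ⁅x, y⁆ ∈ Nle Lgr b := by
            have := bracket_Nle hbracket hy hxN
            rwa [show b + 1 + -1 = b from by ring] at this
          have h3 : ⁅x, y⁆ ∈ Nle Lgr (b - 1) := ih (Submodule.mem_inf.mpr ⟨h1, h2⟩)
          have h4 : ⁅n, y⁆ ∈ Nle Lgr (b - 1) := by
            have := bracket_Nle hbracket hy hn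
            rwa [show b + -1 = b - 1 from by ring] at this
          have h5 : ⁅v, y⁆ ∈ Nle Lgr (b - 1) := by
            have he : ⁅v, y⁆ = ⁅x, y⁆ - ⁅n, y⁆ := by rw [← hvn, add_lie]; abel
            rw [he]; exact sub_mem h3 h4
          have h6 : ⁅v, y⁆ ∈ Lgr b := by
            have := hbracket (b + 1) (-1) v hv y hy
            rwa [show b + 1 + -1 = b from by ring] at this
          exact Nle_disjoint hind (by omega) h6 h5
        rw [show b + 1 - 1 = b from by ring]
        rw [hv0, zero_add] at hvn
        rw [← hvn]; exact hn
    have hJtop : (J : Submodule F L) ≤ Nle Lgr bm := by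
      intro x hx
      have hxT : x ∈ ⨆ i, Lgr i := by rw [htop]; trivial
      refine Submodule.iSup_induction (motive := fun z => z ∈ Nle Lgr bm) Lgr hxT
        (fun i z hz => ?_) (zero_mem _) (fun a b ha hb => add_mem ha hb)
      by_cases hi : i ≤ bm
      · exact Lgr_le_Nle hi hz
      · rw [hbm i (by omega)] at hz
        rw [(Submodule.mem_bot F).mp hz]; exact zero_mem _
    have hdown : ∀ b : ℤ, -2 ≤ b → ((J : Submodule F L) ≤ Nle Lgr b) →
        (J : Submodule F L) ≤ Nle Lgr (-2) := by
      refine Int.le_induction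
        (motive := fun b _ => ((J : Submodule F L) ≤ Nle Lgr b) → (J : Submodule F L) ≤ Nle Lgr (-2))
        (fun h => h) ?_
      · intro b hb ih h
        apply ih
        intro x hx
        have := stepA (b + 1) (by omega) (Submodule.mem_inf.mpr ⟨hx, h hx⟩)
        rwa [show b + 1 - 1 = b from by ring] at this
    exact hJ (hrad J ((hdown bm hbm2 hJtop).trans hNle2))
  obtain ⟨x, hx, hxn⟩ := SetLike.not_le_iff_exists.mp hnot
  obtain ⟨hxJ, hxN⟩ := Submodule.mem_inf.mp hx
  have hsplit := Nle_split hxN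
  rw [show (-1 : ℤ) - 1 = -2 from by norm_num] at hsplit
  obtain ⟨w, hw, n, hn, hwn⟩ := Submodule.mem_sup.mp hsplit
  -- Step 2 : the projection of such elements to degree -1 is an L₀-submodule of L₋₁,
  -- nonzero, hence all of L₋₁ by irreducibility.
  set W : Submodule F L := Lgr (-1) ⊓ ((J : Submodule F L) ⊔ Nle Lgr (-2)) with hWdef
  have hWle : W ≤ Lgr (-1) := inf_le_left
  have hWstab : ∀ z ∈ Lgr 0, ∀ u ∈ W, ⁅z, u⁆ ∈ W := by
    intro z hz u hu
    obtain ⟨hu1, hu2⟩ := Submodule.mem_inf.mp hu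
    refine Submodule.mem_inf.mpr ⟨?_, ?_⟩
    · have := hbracket 0 (-1) z hz u hu1
      rwa [show (0 : ℤ) + -1 = -1 from by norm_num] at this
    · obtain ⟨a, ha, b, hb, hab⟩ := Submodule.mem_sup.mp hu2
      rw [← hab, lie_add]
      refine Submodule.add_mem_sup ?_ ?_
      · exact Stmt2Aux.memId.mpr
          (J.lie_mem (Stmt2Aux.memId.mp ha))
      · have := bracket_Nle' hbracket hz hb
        rwa [show (-2 : ℤ) + 0 = -2 from by norm_num] at this
  have hWne : W ≠ ⊥ := by
    have hwW : w ∈ W := by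
      refine Submodule.mem_inf.mpr ⟨hw, ?_⟩
      have he : w = x + (-n) := by rw [← hwn]; abel
      rw [he]
      exact Submodule.add_mem_sup hxJ (neg_mem hn)
    have hw0 : w ≠ 0 := by
      intro h
      apply hxn
      rw [h, zero_add] at hwn
      rw [← hwn]; exact hn
    intro hbot
    exact hw0 ((Submodule.mem_bot F).mp (hbot ▸ hwW))
  have hW : W = Lgr (-1) := (hirr W hWle hWstab).resolve_left hWne
  have base : Lgr (-1) ≤ (J : Submodule F L) ⊔ Nle Lgr (-2) := by
    rw [← hW]; exact inf_le_right
  -- Step 3 : downward induction using hgen.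
  have claim : ∀ nn : ℕ, ∀ k : ℤ, k = -1 - nn →
      Lgr k ≤ (J : Submodule F L) ⊔ Nle Lgr (k - 1) := by
    intro nn
    induction nn with
    | zero =>
      intro k hk
      have hk' : k = -1 := by simpa using hk
      subst hk'
      rw [show (-1 : ℤ) - 1 = -2 from by norm_num]
      exact base
    | succ nn ih =>
      intro k hk
      have hk2 : (1 : ℤ) < -k := by rw [hk]; push_cast; omega
      have hg := hgen (-k) hk2
      rw [neg_neg] at hg
      rw [hg, Submodule.span_le]
      rintro m ⟨a, ha, b, hb, rfl⟩
      have hb' : b ∈ (J : Submodule F L) ⊔ Nle Lgr (k + 1 - 1) := by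
        refine ih (k + 1) ?_ hb
        rw [hk]; push_cast; ring
      rw [show k + 1 - 1 = k from by ring] at hb'
      obtain ⟨u, hu, n', hn', hun⟩ := Submodule.mem_sup.mp hb'
      have he : ⁅a, b⁆ = ⁅a, u⁆ + ⁅a, n'⁆ := by rw [← hun, lie_add]
      rw [SetLike.mem_coe, he]
      refine Submodule.add_mem_sup ?_ ?_
      · exact Stmt2Aux.memId.mpr
          (J.lie_mem (Stmt2Aux.memId.mp hu))
      · have := bracket_Nle' hbracket ha hn'
        rwa [show k + -1 = k - 1 from by ring] at this
  -- Step 4 : conclude.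
  have hd := claim (-1 - d).toNat d (by rw [Int.toNat_of_nonneg (by omega)]; ring)
  have hbot : Nle Lgr (d - 1) = ⊥ := by
    rw [Nle]
    apply Submodule.span_eq_bot.mpr
    rintro z ⟨i, hi, hz⟩
    rw [hdmin i (by omega)] at hz
    exact (Submodule.mem_bot F).mp hz
  rw [hbot, sup_bot_eq] at hd
  exact hd

end Stmt2Aux

/-- Let `F` be an algebraically closed field of characteristic `p > 0` and let
`L` be a finite-dimensional transitive irreducible `ℤ`-graded Lie algebra over `F` such that the
only ideal of `L` contained in `⊕_{i<0} Lᵢ` is zero.  Then `L` possesses a unique minimal ideal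
`I` (a nonzero ideal contained in every nonzero ideal); moreover `I` is a graded ideal,
`I = ⊕ᵢ (I ∩ Lᵢ)`, and `I ∩ Lᵢ = Lᵢ` for every `i < 0`. -/
theorem stmt_2 {F L : Type*} [Field F] [IsAlgClosed F] [LieRing L] [LieAlgebra F L]
    (p : ℕ) [CharP F p] (hp : 0 < p) [FiniteDimensional F L]
    (Lgr : ℤ → Submodule F L)
    (hdirect : DirectSum.IsInternal Lgr)
    (hbracket : ∀ i j : ℤ, ∀ x ∈ Lgr i, ∀ y ∈ Lgr j, ⁅x, y⁆ ∈ Lgr (i + j))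
    (htrans : ∀ i : ℤ, 0 ≤ i → ∀ x ∈ Lgr i, (∀ y ∈ Lgr (-1), ⁅x, y⁆ = 0) → x = 0)
    (hne : Lgr (-1) ≠ ⊥)
    (hirr : ∀ W : Submodule F L, W ≤ Lgr (-1) →
      (∀ z ∈ Lgr 0, ∀ w ∈ W, ⁅z, w⁆ ∈ W) → W = ⊥ ∨ W = Lgr (-1))
    (hgen : ∀ i : ℤ, 1 < i →
      Lgr (-i) = Submodule.span F {m | ∃ x ∈ Lgr (-1), ∃ y ∈ Lgr (-i + 1), m = ⁅x, y⁆})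
    (hrad : ∀ J : LieIdeal F L, (J : Submodule F L) ≤ ⨆ i < (0 : ℤ), Lgr i → J = ⊥) :
    ∃ I : LieIdeal F L, I ≠ ⊥ ∧ (∀ J : LieIdeal F L, J ≠ ⊥ → I ≤ J) ∧
      ((I : Submodule F L) = ⨆ i : ℤ, (I : Submodule F L) ⊓ Lgr i) ∧
      (∀ i : ℤ, i < 0 → (I : Submodule F L) ⊓ Lgr i = Lgr i) := by
  classical
  have hind : iSupIndep Lgr := hdirect.submodule_iSupIndep
  have htop : ⨆ i, Lgr i = ⊤ := hdirect.submodule_iSup_eq_top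
  have hfin : Set.Finite {i : ℤ | Lgr i ≠ ⊥} := Submodule.finite_ne_bot_of_iSupIndep hind
  set s : Finset ℤ := hfin.toFinset with hs
  have hmem : ∀ i : ℤ, i ∈ s ↔ Lgr i ≠ ⊥ := fun i => hfin.mem_toFinset
  have hm1 : (-1 : ℤ) ∈ s := (hmem (-1)).mpr hne
  have hsne : s.Nonempty := ⟨-1, hm1⟩
  set d : ℤ := s.min' hsne with hddef
  have hd1 : d ≤ -1 := Finset.min'_le s (-1) hm1
  have hdne : Lgr d ≠ ⊥ := (hmem d).mp (s.min'_mem hsne)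
  have hdmin : ∀ i, i < d → Lgr i = ⊥ := by
    intro i hi
    by_contra hci
    exact absurd (Finset.min'_le s i ((hmem i).mpr hci)) (by omega)
  set bm : ℤ := max (s.max' hsne) (-2) with hbmdef
  have hbm2 : (-2 : ℤ) ≤ bm := le_max_right _ _
  have hbm : ∀ i, bm < i → Lgr i = ⊥ := by
    intro i hi
    by_contra hci
    have := Finset.le_max' s i ((hmem i).mpr hci)
    have := le_max_left (s.max' hsne) (-2)
    omega
  have hkey : ∀ J : LieIdeal F L, J ≠ ⊥ → Lgr d ≤ (J : Submodule F L) :=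
    Stmt2Aux.key hind htop hbracket htrans hirr hgen hrad hd1 hdmin hbm2 hbm
  -- the minimal ideal
  set I : LieIdeal F L := LieSubmodule.lieSpan F L (Lgr d : Set L) with hI
  have hdI : Lgr d ≤ (I : Submodule F L) := fun z hz =>
    Stmt2Aux.memId.mpr (LieSubmodule.subset_lieSpan hz)
  have hIne : I ≠ ⊥ := by
    obtain ⟨v, hv, hv0⟩ := (Submodule.ne_bot_iff _).mp hdne
    intro hbot
    have : v ∈ I := LieSubmodule.subset_lieSpan hv
    rw [hbot] at this
    exact hv0 ((LieSubmodule.mem_bot v).mp this)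
  have hImin : ∀ J : LieIdeal F L, J ≠ ⊥ → I ≤ J := by
    intro J hJ
    exact LieSubmodule.lieSpan_le.mpr
      (fun z hz => Stmt2Aux.memId.mp (hkey J hJ hz))
  -- gradedness
  set S : Submodule F L := ⨆ i : ℤ, (I : Submodule F L) ⊓ Lgr i with hSdef
  have hSlie : ∀ (x : L) {m : L}, m ∈ S → ⁅x, m⁆ ∈ S := by
    intro x m hm
    refine Submodule.iSup_induction (motive := fun m => ⁅x, m⁆ ∈ S)
      (fun i => (I : Submodule F L) ⊓ Lgr i) hm (fun i m hmi => ?_)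
      (by show ⁅x, (0:L)⁆ ∈ S; rw [lie_zero]; exact zero_mem _)
      (fun a b ha hb => by show ⁅x, a + b⁆ ∈ S; rw [lie_add]; exact add_mem ha hb)
    obtain ⟨hmI, hmL⟩ := Submodule.mem_inf.mp hmi
    have hxT : x ∈ ⨆ j, Lgr j := by rw [htop]; trivial
    refine Submodule.iSup_induction (motive := fun x => ⁅x, m⁆ ∈ S) Lgr hxT
      (fun j z hz => ?_) (by show ⁅(0:L), m⁆ ∈ S; rw [zero_lie]; exact zero_mem _)
      (fun a b ha hb => by show ⁅a + b, m⁆ ∈ S; rw [add_lie]; exact add_mem ha hb)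
    refine Submodule.mem_iSup_of_mem (j + i) (Submodule.mem_inf.mpr ⟨?_, ?_⟩)
    · exact Stmt2Aux.memId.mpr
        (I.lie_mem (Stmt2Aux.memId.mp hmI))
    · exact hbracket j i z hz m hmL
  set SLie : LieIdeal F L := ⟨S, fun {x m} hm => hSlie x hm⟩ with hSLie
  have hgraded : (I : Submodule F L) = S := by
    apply le_antisymm
    · have hIS : I ≤ SLie := by
        apply LieSubmodule.lieSpan_le.mpr
        intro z hz
        show z ∈ S
        exact Submodule.mem_iSup_of_mem d (Submodule.mem_inf.mpr ⟨hdI hz, hz⟩)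
      exact fun z hz => hIS (Stmt2Aux.memId.mp hz)
    · exact iSup_le fun i => inf_le_left
  -- negative pieces
  have hIL1 : (I : Submodule F L) ⊓ Lgr (-1) ≠ ⊥ := by
    have hex : ∃ i : ℤ, 0 ≤ i ∧ (I : Submodule F L) ⊓ Lgr i ≠ ⊥ := by
      by_contra hc
      push_neg at hc
      have hle : (I : Submodule F L) ≤ ⨆ i < (0 : ℤ), Lgr i := by
        rw [hgraded]
        refine iSup_le fun i => ?_
        by_cases hi : i < 0
        · exact inf_le_right.trans (le_iSup_of_le i (le_iSup (fun _ => Lgr i) hi))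
        · rw [hc i (by omega)]; exact bot_le
      exact hIne (hrad I hle)
    obtain ⟨i0, hi0, hI0⟩ := hex
    have hdesc : ∀ i : ℤ, -1 ≤ i →
        ((I : Submodule F L) ⊓ Lgr i ≠ ⊥ → (I : Submodule F L) ⊓ Lgr (-1) ≠ ⊥) := by
      refine Int.le_induction
        (motive := fun i _ => (I : Submodule F L) ⊓ Lgr i ≠ ⊥ → (I : Submodule F L) ⊓ Lgr (-1) ≠ ⊥)
        id ?_
      · intro i hi ih hne2
        obtain ⟨v, hv, hv0⟩ := (Submodule.ne_bot_iff _).mp hne2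
        obtain ⟨hvI, hvL⟩ := Submodule.mem_inf.mp hv
        have hexy : ∃ y ∈ Lgr (-1), ⁅v, y⁆ ≠ 0 := by
          by_contra hcy
          push_neg at hcy
          exact hv0 (htrans (i + 1) (by omega) v hvL hcy)
        obtain ⟨y, hy, hvy⟩ := hexy
        apply ih
        apply (Submodule.ne_bot_iff _).mpr
        refine ⟨⁅v, y⁆, Submodule.mem_inf.mpr ⟨?_, ?_⟩, hvy⟩
        · exact Stmt2Aux.memId.mpr
            (lie_mem_left F L I v y (Stmt2Aux.memId.mp hvI))
        · have := hbracket (i + 1) (-1) v hvL y hy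
          rwa [show i + 1 + -1 = i from by ring] at this
    exact hdesc i0 (by omega) hI0
  have hL1I : Lgr (-1) ≤ (I : Submodule F L) := by
    have hV := hirr ((I : Submodule F L) ⊓ Lgr (-1)) inf_le_right ?_
    · rcases hV with hV | hV
      · exact absurd hV hIL1
      · rw [← hV]; exact inf_le_left
    · intro z hz u hu
      obtain ⟨hu1, hu2⟩ := Submodule.mem_inf.mp hu
      refine Submodule.mem_inf.mpr ⟨?_, ?_⟩
      · exact Stmt2Aux.memId.mpr
          (I.lie_mem (Stmt2Aux.memId.mp hu1))
      · have := hbracket 0 (-1) z hz u hu2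
        rwa [show (0 : ℤ) + -1 = -1 from by norm_num] at this
  have hnegI : ∀ i : ℤ, i < 0 → Lgr i ≤ (I : Submodule F L) := by
    have hstep : ∀ nn : ℕ, ∀ k : ℤ, k = -1 - nn → Lgr k ≤ (I : Submodule F L) := by
      intro nn
      induction nn with
      | zero =>
        intro k hk
        have hk' : k = -1 := by simpa using hk
        rw [hk']; exact hL1I
      | succ nn ih =>
        intro k hk
        have hk2 : (1 : ℤ) < -k := by rw [hk]; push_cast; omega
        have hg := hgen (-k) hk2
        rw [neg_neg] at hg
        rw [hg, Submodule.span_le]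
        rintro m ⟨a, ha, b, hb, rfl⟩
        have hbI : b ∈ (I : Submodule F L) := ih (k + 1) (by rw [hk]; push_cast; ring) hb
        exact SetLike.mem_coe.mpr (Stmt2Aux.memId.mpr
          (I.lie_mem (Stmt2Aux.memId.mp hbI)))
    intro i hi
    apply hstep (-1 - i).toNat i
    rw [Int.toNat_of_nonneg (by omega)]; ring
  refine ⟨I, hIne, hImin, hgraded, fun i hi => inf_eq_right.mpr (hnegI i hi)⟩
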